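/- The lower-triangular matrix operator with diagonal entries E_+(k_+), E_+(k_-) and (2,1)-entry γ satisfies the transmutation relation Ê·D̂_k = D̂_{k+(2,-1)}·Ê if and only if γ = -1. -/

import Mathlib

open Polynomial

/-- `f : ℂ → ℂ` is (the evaluation of) a Laurent polynomial. -/
def IsLaurent (f : ℂ → ℂ) : Prop :=
  ∃ (p : Polynomial ℂ) (n : ℕ), ∀ z : ℂ, z ≠ 0 → f z = p.eval z / z ^ n

/-- The contiguity shift operator `E₊(k)`. -/
noncomputable def Eplus (k1 k2 : ℂ) (f : ℂ → ℂ) : ℂ → ℂ := fun z =>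
  ((1 + z⁻¹) / (1 - z⁻¹)) * (z * deriv f z) + (k2 - 1/2) * f z

/-- The contiguity shift operator `E₋(k)`. -/
noncomputable def Eminus (k1 k2 : ℂ) (f : ℂ → ℂ) : ℂ → ℂ := fun z =>
  ((1 - z⁻¹) / (1 + z⁻¹)) * (z * deriv f z) + (k1 + k2 - 1/2) * f z

/-- The 2×2 matrix operator `D̂_k = [[(1-k₁)/2, -E₊(k₋)], [-E₋(k₊), (1+k₁)/2]]`. -/
noncomputable def Dhat (k1 k2 : ℂ) (fg : (ℂ → ℂ) × (ℂ → ℂ)) : (ℂ → ℂ) × (ℂ → ℂ) :=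
  (fun z => (1 - k1) / 2 * fg.1 z - Eplus (k1 - 1) (k2 + 1) fg.2 z,
   fun z => -Eminus (k1 + 1) k2 fg.1 z + (1 + k1) / 2 * fg.2 z)

/-- The lower triangular matrix operator `Ê = [[E₊(k₊), 0], [γ, E₊(k₋)]]`. -/
noncomputable def Ehat (k1 k2 γ : ℂ) (fg : (ℂ → ℂ) × (ℂ → ℂ)) : (ℂ → ℂ) × (ℂ → ℂ) :=
  (Eplus (k1 + 1) k2 fg.1,
   fun z => γ * fg.1 z + Eplus (k1 - 1) (k2 + 1) fg.2 z)


lemma analyticAt_deriv' {f : ℂ → ℂ} {z : ℂ} (hf : AnalyticAt ℂ f z) :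
    AnalyticAt ℂ (deriv f) z := by
  have h1 : AnalyticAt ℂ (fun w => fderiv ℂ f w 1) z :=
    ((ContinuousLinearMap.apply ℂ ℂ (1:ℂ)).analyticAt _).comp hf.fderiv
  exact h1.congr (Filter.Eventually.of_forall fun w => fderiv_apply_one_eq_deriv)

lemma hasDerivAt_shape_plus (c : ℂ) (u : ℂ → ℂ) {z : ℂ} (hz : z ≠ 0)
    (h1 : (1:ℂ) - z⁻¹ ≠ 0) (hu : AnalyticAt ℂ u z) :
    HasDerivAt (fun w => (1 + w⁻¹) / (1 - w⁻¹) * (w * deriv u w) + c * u w)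
      (-2 * (z ^ 2)⁻¹ / (1 - z⁻¹) ^ 2 * (z * deriv u z)
        + (1 + z⁻¹) / (1 - z⁻¹) * (deriv u z + z * deriv (deriv u) z)
        + c * deriv u z) z := by
  have hdu := hu.differentiableAt.hasDerivAt
  have hdu2 : HasDerivAt (deriv u) (deriv (deriv u) z) z :=
    (analyticAt_deriv' hu).differentiableAt.hasDerivAt
  have hinv := hasDerivAt_inv hz
  have hA : HasDerivAt (fun w : ℂ => (1 + w⁻¹) / (1 - w⁻¹))
      (((0 + -(z ^ 2)⁻¹) * (1 - z⁻¹) - (1 + z⁻¹) * (0 - -(z ^ 2)⁻¹)) / (1 - z⁻¹) ^ 2) z :=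
    ((hasDerivAt_const z (1:ℂ)).add hinv).div ((hasDerivAt_const z (1:ℂ)).sub hinv) h1
  have H := (hA.mul ((hasDerivAt_id z).mul hdu2)).add (hdu.const_mul c)
  refine H.congr_deriv ?_
  simp only [Pi.mul_apply, id_eq]
  ring

lemma hasDerivAt_shape_minus (c : ℂ) (u : ℂ → ℂ) {z : ℂ} (hz : z ≠ 0)
    (hm1 : (1:ℂ) + z⁻¹ ≠ 0) (hu : AnalyticAt ℂ u z) :
    HasDerivAt (fun w => (1 - w⁻¹) / (1 + w⁻¹) * (w * deriv u w) + c * u w)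
      (2 * (z ^ 2)⁻¹ / (1 + z⁻¹) ^ 2 * (z * deriv u z)
        + (1 - z⁻¹) / (1 + z⁻¹) * (deriv u z + z * deriv (deriv u) z)
        + c * deriv u z) z := by
  have hdu := hu.differentiableAt.hasDerivAt
  have hdu2 : HasDerivAt (deriv u) (deriv (deriv u) z) z :=
    (analyticAt_deriv' hu).differentiableAt.hasDerivAt
  have hinv := hasDerivAt_inv hz
  have hB : HasDerivAt (fun w : ℂ => (1 - w⁻¹) / (1 + w⁻¹))
      (((0 - -(z ^ 2)⁻¹) * (1 + z⁻¹) - (1 - z⁻¹) * (0 + -(z ^ 2)⁻¹)) / (1 + z⁻¹) ^ 2) z :=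
    ((hasDerivAt_const z (1:ℂ)).sub hinv).div ((hasDerivAt_const z (1:ℂ)).add hinv) hm1
  have H := (hB.mul ((hasDerivAt_id z).mul hdu2)).add (hdu.const_mul c)
  refine H.congr_deriv ?_
  simp only [Pi.mul_apply, id_eq]
  ring

set_option maxHeartbeats 2000000 in
lemma key_id (k1 k2 γ : ℂ) (f g : ℂ → ℂ) {z : ℂ} (hz : z ≠ 0)
    (h1 : (1:ℂ) - z⁻¹ ≠ 0) (hm1 : (1:ℂ) + z⁻¹ ≠ 0)
    (haf : AnalyticAt ℂ f z) (hag : AnalyticAt ℂ g z) :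
    (Ehat k1 k2 γ (Dhat k1 k2 (f, g))).1 z
        = (Dhat (k1 + 2) (k2 - 1) (Ehat k1 k2 γ (f, g))).1 z
          + (1 + γ) * Eplus (k1 + 1) k2 f z
    ∧ (Ehat k1 k2 γ (Dhat k1 k2 (f, g))).2 z
        = (Dhat (k1 + 2) (k2 - 1) (Ehat k1 k2 γ (f, g))).2 z
          + (1 + γ) * (-((1 + k1) * f z) - Eplus (k1 - 1) (k2 + 1) g z) := by
  have hdf := haf.differentiableAt.hasDerivAt
  have hdg := hag.differentiableAt.hasDerivAt
  have dD1 : deriv (fun w => (1 - k1) / 2 * f w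
        - ((1 + w⁻¹) / (1 - w⁻¹) * (w * deriv g w) + (k2 + 1 - 1/2) * g w)) z
      = (1 - k1) / 2 * deriv f z
        - (-2 * (z ^ 2)⁻¹ / (1 - z⁻¹) ^ 2 * (z * deriv g z)
            + (1 + z⁻¹) / (1 - z⁻¹) * (deriv g z + z * deriv (deriv g) z)
            + (k2 + 1 - 1/2) * deriv g z) :=
    ((hdf.const_mul ((1 - k1) / 2)).sub
      (hasDerivAt_shape_plus (k2 + 1 - 1/2) g hz h1 hag)).deriv
  have dD2 : deriv (fun w => -((1 - w⁻¹) / (1 + w⁻¹) * (w * deriv f w)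
        + (k1 + 1 + k2 - 1/2) * f w) + (1 + k1) / 2 * g w) z
      = -(2 * (z ^ 2)⁻¹ / (1 + z⁻¹) ^ 2 * (z * deriv f z)
            + (1 - z⁻¹) / (1 + z⁻¹) * (deriv f z + z * deriv (deriv f) z)
            + (k1 + 1 + k2 - 1/2) * deriv f z)
        + (1 + k1) / 2 * deriv g z :=
    ((hasDerivAt_shape_minus (k1 + 1 + k2 - 1/2) f hz hm1 haf).neg.add
      (hdg.const_mul ((1 + k1) / 2))).deriv
  have dE1 : deriv (fun w => (1 + w⁻¹) / (1 - w⁻¹) * (w * deriv f w) + (k2 - 1/2) * f w) z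
      = -2 * (z ^ 2)⁻¹ / (1 - z⁻¹) ^ 2 * (z * deriv f z)
        + (1 + z⁻¹) / (1 - z⁻¹) * (deriv f z + z * deriv (deriv f) z)
        + (k2 - 1/2) * deriv f z :=
    (hasDerivAt_shape_plus (k2 - 1/2) f hz h1 haf).deriv
  have dE2 : deriv (fun w => γ * f w
        + ((1 + w⁻¹) / (1 - w⁻¹) * (w * deriv g w) + (k2 + 1 - 1/2) * g w)) z
      = γ * deriv f z
        + (-2 * (z ^ 2)⁻¹ / (1 - z⁻¹) ^ 2 * (z * deriv g z)
            + (1 + z⁻¹) / (1 - z⁻¹) * (deriv g z + z * deriv (deriv g) z)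
            + (k2 + 1 - 1/2) * deriv g z) :=
    ((hdf.const_mul γ).add (hasDerivAt_shape_plus (k2 + 1 - 1/2) g hz h1 hag)).deriv
  constructor
  · show (1 + z⁻¹) / (1 - z⁻¹) * (z * deriv (fun w => (1 - k1) / 2 * f w
          - ((1 + w⁻¹) / (1 - w⁻¹) * (w * deriv g w) + (k2 + 1 - 1/2) * g w)) z)
        + (k2 - 1/2) * ((1 - k1) / 2 * f z
            - ((1 + z⁻¹) / (1 - z⁻¹) * (z * deriv g z) + (k2 + 1 - 1/2) * g z))
      = (1 - (k1 + 2)) / 2 * ((1 + z⁻¹) / (1 - z⁻¹) * (z * deriv f z) + (k2 - 1/2) * f z)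
          - ((1 + z⁻¹) / (1 - z⁻¹) * (z * deriv (fun w => γ * f w
              + ((1 + w⁻¹) / (1 - w⁻¹) * (w * deriv g w) + (k2 + 1 - 1/2) * g w)) z)
            + (k2 - 1 + 1 - 1/2) * (γ * f z
              + ((1 + z⁻¹) / (1 - z⁻¹) * (z * deriv g z) + (k2 + 1 - 1/2) * g z)))
        + (1 + γ) * ((1 + z⁻¹) / (1 - z⁻¹) * (z * deriv f z) + (k2 - 1/2) * f z)
    rw [dD1, dE2]
    ring
  · show γ * ((1 - k1) / 2 * f z
          - ((1 + z⁻¹) / (1 - z⁻¹) * (z * deriv g z) + (k2 + 1 - 1/2) * g z))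
        + ((1 + z⁻¹) / (1 - z⁻¹) * (z * deriv (fun w =>
              -((1 - w⁻¹) / (1 + w⁻¹) * (w * deriv f w) + (k1 + 1 + k2 - 1/2) * f w)
              + (1 + k1) / 2 * g w) z)
          + (k2 + 1 - 1/2) * (-((1 - z⁻¹) / (1 + z⁻¹) * (z * deriv f z)
              + (k1 + 1 + k2 - 1/2) * f z) + (1 + k1) / 2 * g z))
      = -((1 - z⁻¹) / (1 + z⁻¹) * (z * deriv (fun w =>
              (1 + w⁻¹) / (1 - w⁻¹) * (w * deriv f w) + (k2 - 1/2) * f w) z)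
            + (k1 + 2 + 1 + (k2 - 1) - 1/2) * ((1 + z⁻¹) / (1 - z⁻¹) * (z * deriv f z)
              + (k2 - 1/2) * f z))
          + (1 + (k1 + 2)) / 2 * (γ * f z
            + ((1 + z⁻¹) / (1 - z⁻¹) * (z * deriv g z) + (k2 + 1 - 1/2) * g z))
        + (1 + γ) * (-((1 + k1) * f z)
            - ((1 + z⁻¹) / (1 - z⁻¹) * (z * deriv g z) + (k2 + 1 - 1/2) * g z))
    rw [dD2, dE1]
    have hz1 : z - 1 ≠ 0 := sub_ne_zero.mpr (by rintro rfl; simp at h1)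
    have hzm1 : z + 1 ≠ 0 := by
      intro h
      exact hm1 (by rw [show z = -1 from by linear_combination h]; norm_num)
    have eA : (1 + z⁻¹) / (1 - z⁻¹) = (z + 1) * (z - 1)⁻¹ := by
      rw [div_eq_iff h1]
      field_simp
      try ring
    have eB : (1 - z⁻¹) / (1 + z⁻¹) = (z - 1) * (z + 1)⁻¹ := by
      rw [div_eq_iff hm1]
      field_simp
      try ring
    have eA' : -2 * (z ^ 2)⁻¹ / (1 - z⁻¹) ^ 2 = -2 * (z - 1)⁻¹ ^ 2 := by
      rw [div_eq_iff (pow_ne_zero 2 h1)]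
      field_simp
      try ring
    have eB' : 2 * (z ^ 2)⁻¹ / (1 + z⁻¹) ^ 2 = 2 * (z + 1)⁻¹ ^ 2 := by
      rw [div_eq_iff (pow_ne_zero 2 hm1)]
      field_simp
      try ring
    rw [eA, eB, eA', eB']
    linear_combination
      ((2 : ℂ) * deriv f z + (-2 : ℂ) * (z + 1)⁻¹ ^ 2 * deriv f z + z * deriv f z
        + (-2 : ℂ) * z * (z + 1)⁻¹ * deriv f z + (-4 : ℂ) * z * (z + 1)⁻¹ ^ 2 * deriv f z
        + (-2 : ℂ) * z ^ 2 * (z + 1)⁻¹ ^ 2 * deriv f z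
        + (-2 : ℂ) * z ^ 2 * (z - 1)⁻¹ * (z + 1)⁻¹ * deriv f z) * (mul_inv_cancel₀ hz1)
      + ((-2 : ℂ) * deriv f z + (-2 : ℂ) * (z + 1)⁻¹ * deriv f z
        + (-2 : ℂ) * (z - 1)⁻¹ * deriv f z + (-2 : ℂ) * (z - 1)⁻¹ * (z + 1)⁻¹ * deriv f z
        + (-1 : ℂ) * z * deriv f z + (-2 : ℂ) * z * (z + 1)⁻¹ * deriv f z) * (mul_inv_cancel₀ hzm1)


lemma isLaurent_analyticAt {f : ℂ → ℂ} (hf : IsLaurent f) {z : ℂ} (hz : z ≠ 0) :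
    AnalyticAt ℂ f z := by
  obtain ⟨p, n, hp⟩ := hf
  have hpa : AnalyticAt ℂ (fun w => p.eval w) z := by
    have := (analyticAt_id (𝕜 := ℂ) (z := z)).aeval_polynomial p
    simpa [Polynomial.coe_aeval_eq_eval] using this
  have hF : AnalyticAt ℂ (fun w => p.eval w / w ^ n) z :=
    hpa.div ((analyticAt_id (𝕜 := ℂ) (z := z)).pow n) (pow_ne_zero n hz)
  exact hF.congr <| (eventually_ne_nhds hz).mono fun w hw => (hp w hw).symm

theorem stmt5 (k1 k2 γ : ℂ) :
    (∀ f g : ℂ → ℂ, IsLaurent f → IsLaurent g →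
      ∀ z : ℂ, z ≠ 0 → z ^ 2 ≠ 1 →
        (Ehat k1 k2 γ (Dhat k1 k2 (f, g))).1 z
            = (Dhat (k1 + 2) (k2 - 1) (Ehat k1 k2 γ (f, g))).1 z ∧
        (Ehat k1 k2 γ (Dhat k1 k2 (f, g))).2 z
            = (Dhat (k1 + 2) (k2 - 1) (Ehat k1 k2 γ (f, g))).2 z)
      ↔ γ = -1 := by
  constructor
  · intro h
    by_contra hγ
    have hne : (1 : ℂ) + γ ≠ 0 := fun hh => hγ (by linear_combination hh)
    have hid : IsLaurent (fun w : ℂ => w) := ⟨Polynomial.X, 0, fun z _ => by simp⟩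
    have h0 : IsLaurent (fun _ : ℂ => (0 : ℂ)) := ⟨0, 0, fun z _ => by simp⟩
    have h2 := (h _ _ hid h0 2 (by norm_num) (by norm_num)).1
    have h3 := (h _ _ hid h0 3 (by norm_num) (by norm_num)).1
    have key2 := (key_id k1 k2 γ (fun w : ℂ => w) (fun _ : ℂ => (0 : ℂ)) (z := 2)
        (by norm_num) (by norm_num) (by norm_num) analyticAt_id analyticAt_const).1
    have key3 := (key_id k1 k2 γ (fun w : ℂ => w) (fun _ : ℂ => (0 : ℂ)) (z := 3)
        (by norm_num) (by norm_num) (by norm_num) analyticAt_id analyticAt_const).1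
    have t2 : (1 + γ) * Eplus (k1 + 1) k2 (fun w : ℂ => w) 2 = 0 := by
      linear_combination h2 - key2
    have t3 : (1 + γ) * Eplus (k1 + 1) k2 (fun w : ℂ => w) 3 = 0 := by
      linear_combination h3 - key3
    have v2 : Eplus (k1 + 1) k2 (fun w : ℂ => w) 2 = 2 * k2 + 5 := by
      simp only [Eplus, deriv_id'']
      norm_num
      ring
    have v3 : Eplus (k1 + 1) k2 (fun w : ℂ => w) 3 = 3 * k2 + 9 / 2 := by
      simp only [Eplus, deriv_id'']
      norm_num
      ring
    rw [v2] at t2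
    rw [v3] at t3
    have a2 : (2 : ℂ) * k2 + 5 = 0 := (mul_eq_zero.mp t2).resolve_left hne
    have a3 : (3 : ℂ) * k2 + 9 / 2 = 0 := (mul_eq_zero.mp t3).resolve_left hne
    have : (6 : ℂ) = 0 := by linear_combination 3 * a2 - 2 * a3
    norm_num at this
  · intro hγ f g hf hg z hz hz2
    have hz1 : z ≠ 1 := fun h => hz2 (by rw [h]; norm_num)
    have hzm1 : z ≠ -1 := fun h => hz2 (by rw [h]; norm_num)
    have h1 : (1 : ℂ) - z⁻¹ ≠ 0 := by
      intro h
      exact hz1 (by rw [← inv_inv z, show z⁻¹ = 1 from by linear_combination -h]; norm_num)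
    have hm1 : (1 : ℂ) + z⁻¹ ≠ 0 := by
      intro h
      exact hzm1 (by rw [← inv_inv z, show z⁻¹ = -1 from by linear_combination h]; norm_num)
    have haf := isLaurent_analyticAt hf hz
    have hag := isLaurent_analyticAt hg hz
    obtain ⟨K1, K2⟩ := key_id k1 k2 γ f g hz h1 hm1 haf hag
    constructor
    · rw [K1, hγ]; ring
    · rw [K2, hγ]; ring
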